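/- arXiv:2106.13994 — 3 statements merged into one kernel-verified Lean document; each statement's English description precedes it below -/
import Mathlib

section
/- Let Q : [0,∞) → ℝ be a bounded, nonnegative, measurable function and let λ ∈ (0,1). Suppose that Q(t) ≤ (λ/t) ∫₀ᵗ Q(t') dt' + ε(t) for all t > 0, where ε(t) → 0 as t → +∞. Then limsup_{t→+∞} Q(t) = 0. -/
open MeasureTheory Set Filter Topology

/-- If a bounded, nonnegative, measurable `Q` satisfies
`Q t ≤ (λ/t) ∫₀ᵗ Q + ε t` with `ε → 0` and `λ ∈ (0,1)`, then `Q → 0` at infinity. -/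
theorem stmt0 (Q ε : ℝ → ℝ) (M lam : ℝ)
    (hlam0 : 0 < lam) (hlam1 : lam < 1)
    (hQmeas : Measurable Q) (hQ0 : ∀ t, 0 ≤ Q t) (hQM : ∀ t, Q t ≤ M)
    (hrec : ∀ t, 0 < t → Q t ≤ (lam / t) * (∫ t' in Ioc (0:ℝ) t, Q t') + ε t)
    (hε : Tendsto ε atTop (𝓝 0)) :
    Tendsto Q atTop (𝓝 0) := by
  have hM0 : 0 ≤ M := le_trans (hQ0 0) (hQM 0)
  have hint : ∀ a b : ℝ, IntegrableOn Q (Ioc a b) := by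
    intro a b
    refine Integrable.mono' (integrableOn_const (C := M) measure_Ioc_lt_top.ne)
      hQmeas.aestronglyMeasurable.restrict ?_
    filter_upwards with x
    rw [Real.norm_eq_abs, abs_of_nonneg (hQ0 x)]
    exact hQM x
  set S : Set ℝ := {c : ℝ | 0 ≤ c ∧ ∀ᶠ t in atTop, Q t ≤ c} with hS
  have hMS : M ∈ S := ⟨hM0, Eventually.of_forall hQM⟩
  have hbdd : BddBelow S := ⟨0, fun c hc => hc.1⟩
  have key : ∀ c ∈ S, ∀ δ : ℝ, 0 < δ → lam * c + δ ∈ S := by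
    rintro c ⟨hc0, hc⟩ δ hδ
    constructor
    · positivity
    rw [eventually_atTop] at hc
    obtain ⟨T₀, hT⟩ := hc
    set T := max T₀ 1 with hTdef
    have hT1 : 1 ≤ T := le_max_right _ _
    have hT0 : 0 ≤ T := by linarith
    have h1 : ∀ᶠ t in atTop, 2 * lam * M * T / δ ≤ t := eventually_ge_atTop _
    have h2 : ∀ᶠ t in atTop, T + 1 ≤ t := eventually_ge_atTop _
    have h3 : ∀ᶠ t in atTop, |ε t| < δ / 2 := by
      have := Metric.tendsto_nhds.mp hε (δ / 2) (by positivity)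
      simpa [Real.dist_eq] using this
    filter_upwards [h1, h2, h3] with t ht1 ht2 ht3
    have htT : T < t := by linarith
    have ht0 : 0 < t := by linarith
    -- split the integral
    have hsplit : (∫ t' in Ioc (0:ℝ) t, Q t')
        = (∫ t' in Ioc (0:ℝ) T, Q t') + ∫ t' in Ioc T t, Q t' := by
      rw [← setIntegral_union (Set.Ioc_disjoint_Ioc_of_le le_rfl) measurableSet_Ioc
          (hint 0 T) (hint T t), Set.Ioc_union_Ioc_eq_Ioc hT0 htT.le]
    have hI1 : (∫ t' in Ioc (0:ℝ) T, Q t') ≤ M * T := by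
      have := setIntegral_mono_on (hint 0 T)
        (integrableOn_const measure_Ioc_lt_top.ne) measurableSet_Ioc
        (fun x _ => hQM x)
      simpa [Real.volume_Ioc, mul_comm] using this.trans_eq (by
        simp [Real.volume_Ioc, ENNReal.toReal_ofReal hT0, smul_eq_mul, mul_comm, hT0])
    have hI2 : (∫ t' in Ioc T t, Q t') ≤ c * (t - T) := by
      have := setIntegral_mono_on (hint T t)
        (integrableOn_const measure_Ioc_lt_top.ne) measurableSet_Ioc
        (fun x hx => hT x (le_trans (le_max_left _ _) hx.1.le))
      refine this.trans_eq ?_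
      rw [setIntegral_const, Real.volume_real_Ioc_of_le (by linarith),
        smul_eq_mul, mul_comm]
    have hQt := hrec t ht0
    have hfrac : (lam / t) * (∫ t' in Ioc (0:ℝ) t, Q t')
        ≤ (lam / t) * (M * T + c * (t - T)) := by
      apply mul_le_mul_of_nonneg_left _ (by positivity)
      rw [hsplit]; linarith
    have hεt : ε t ≤ δ / 2 := le_of_lt (lt_of_le_of_lt (le_abs_self _) ht3)
    have hbound : (lam / t) * (M * T + c * (t - T)) ≤ lam * c + δ / 2 := by
      have hδt : 2 * lam * M * T ≤ δ * t := by
        rw [div_le_iff₀ hδ] at ht1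
        linarith
      rw [div_mul_eq_mul_div, div_le_iff₀ ht0]
      have h4 : lam * (c * (t - T)) ≤ lam * c * t := by
        have : c * (t - T) ≤ c * t := by nlinarith
        nlinarith
      nlinarith
    linarith
  -- the infimum of S is 0
  have hne : S.Nonempty := ⟨M, hMS⟩
  set L := sInf S with hL
  have hL0 : 0 ≤ L := le_csInf hne (fun c hc => hc.1)
  have hLle : ∀ c ∈ S, L ≤ lam * c := by
    intro c hc
    refine le_of_forall_pos_le_add fun δ hδ => ?_
    exact csInf_le hbdd (key c hc δ hδ)
  have hLL : L ≤ lam * L := by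
    have : ∀ c ∈ S, L / lam ≤ c := fun c hc => (div_le_iff₀' hlam0).mpr (hLle c hc)
    have h5 : L / lam ≤ L := le_csInf hne this
    rw [div_le_iff₀ hlam0] at h5
    linarith [h5, mul_comm L lam]
  have hL0' : L = 0 := by nlinarith
  -- conclude
  rw [Metric.tendsto_nhds]
  intro δ hδ
  have : ∃ c ∈ S, c < δ := by
    by_contra h
    push_neg at h
    have : δ ≤ L := le_csInf hne h
    linarith
  obtain ⟨c, hc, hcδ⟩ := this
  filter_upwards [hc.2] with t ht
  rw [Real.dist_eq, sub_zero, abs_of_nonneg (hQ0 t)]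
  exact lt_of_le_of_lt ht hcδ
end

section
/- Let Q : [0,∞) → ℝ be bounded, nonnegative and measurable, let λ ∈ (0,1) and κ ∈ (0, 1-λ), i.e. λ/(1-κ) < 1. Suppose Q(t) ≤ (λ/t)∫₀ᵗ Q(t') dt' + A(t) for all t > 0, where A is nonincreasing and ∫₁^∞ t^{κ-1} A(t) dt < ∞. Then ∫₀^∞ t^{κ-1} Q(t) dt < +∞. -/
open MeasureTheory Set Filter Topology

/-- If a bounded, nonnegative, measurable `Q` satisfies
`Q t ≤ (λ/t) ∫₀ᵗ Q + A t` with `A` nonincreasing, `∫₁^∞ t^{κ-1} A t dt < ∞`,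
`λ ∈ (0,1)` and `0 < κ < 1 - λ`, then `∫₀^∞ t^{κ-1} Q t dt < ∞`. -/
theorem stmt1 (Q A : ℝ → ℝ) (M lam κ : ℝ)
    (hlam0 : 0 < lam) (hlam1 : lam < 1) (hκ0 : 0 < κ) (hκ : κ < 1 - lam)
    (hQmeas : Measurable Q) (hQ0 : ∀ t, 0 ≤ Q t) (hQM : ∀ t, Q t ≤ M)
    (hA0 : ∀ t, 0 < t → 0 ≤ A t) (hAmono : AntitoneOn A (Ioi (0:ℝ)))
    (hAint : IntegrableOn (fun t => t ^ (κ - 1) * A t) (Ioi (1:ℝ)))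
    (hrec : ∀ t, 0 < t → Q t ≤ (lam / t) * (∫ t' in Ioc (0:ℝ) t, Q t') + A t) :
    IntegrableOn (fun t => t ^ (κ - 1) * Q t) (Ioi (0:ℝ)) := by
  have hM : 0 ≤ M := (hQ0 0).trans (hQM 0)
  have h1κ : (0:ℝ) < 1 - κ := by linarith
  have hmeas : Measurable fun t : ℝ => t ^ (κ - 1) * Q t :=
    by fun_prop
  -- integrability of Q on bounded sets
  have hQint : ∀ t : ℝ, IntegrableOn Q (Ioc 0 t) := by
    intro t
    refine Integrable.mono' (g := fun _ => M) (integrableOn_const measure_Ioc_lt_top.ne)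
      hQmeas.aestronglyMeasurable (ae_of_all _ fun s => ?_)
    rw [Real.norm_eq_abs, abs_of_nonneg (hQ0 s)]
    exact hQM s
  set F : ℝ → ℝ := fun t => ∫ s in Ioc (0:ℝ) t, Q s with hF
  have hFmono : Monotone F := by
    intro a b hab
    exact setIntegral_mono_set (hQint b) (ae_of_all _ hQ0)
      (HasSubset.Subset.eventuallyLE (Ioc_subset_Ioc le_rfl hab))
  have hFmeas : Measurable F := hFmono.measurable
  have hFof : ∀ t : ℝ, ENNReal.ofReal (F t) = ∫⁻ s in Ioc (0:ℝ) t, ENNReal.ofReal (Q s) :=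
    fun t => ofReal_integral_eq_lintegral_ofReal (hQint t) (ae_of_all _ hQ0)
  -- the constant C from A
  set C : ENNReal := ∫⁻ t in Ioi (1:ℝ), ENNReal.ofReal (t ^ (κ - 1) * A t) with hCdef
  have hCfin : C < ⊤ := by
    have := hAint.2
    rw [hasFiniteIntegral_iff_ofReal ?nn] at this
    · exact this
    case nn =>
      refine (ae_restrict_iff' measurableSet_Ioi).2 (ae_of_all _ fun t ht => ?_)
      exact mul_nonneg (Real.rpow_nonneg (by linarith [mem_Ioi.1 ht]) _)
        (hA0 t (by linarith [mem_Ioi.1 ht]))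
  set g : ℝ → ENNReal := fun t => ENNReal.ofReal (t ^ (κ - 1) * Q t) with hgdef
  have hgmeas : Measurable g := (by fun_prop : Measurable fun t : ℝ => t ^ (κ-1) * Q t).ennreal_ofReal
  -- main uniform estimate
  have hmain : ∀ T : ℝ, 1 ≤ T → (∫⁻ t in Ioc (1:ℝ) T, g t) ≤
      ENNReal.ofReal lam * ENNReal.ofReal (1-κ)⁻¹ *
        (ENNReal.ofReal M + ∫⁻ t in Ioc (1:ℝ) T, g t) + C := by
    intro T hT
    set I : ENNReal := ∫⁻ t in Ioc (1:ℝ) T, g t with hIdef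
    set J : ENNReal := ∫⁻ t in Ioc (1:ℝ) T, ENNReal.ofReal (t ^ (κ-2) * F t) with hJdef
    have hrp2 : Measurable fun t : ℝ => t ^ (κ - 2) := by fun_prop
    -- Step A : I ≤ ofReal lam * J + C
    have stepA : I ≤ ENNReal.ofReal lam * J + C := by
      have pt : ∀ t ∈ Ioc (1:ℝ) T, g t ≤
          ENNReal.ofReal lam * ENNReal.ofReal (t ^ (κ-2) * F t)
            + ENNReal.ofReal (t ^ (κ-1) * A t) := by
        intro t ht
        have ht0 : (0:ℝ) < t := lt_trans one_pos ht.1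
        have e1 : t ^ (κ-1) * Q t ≤ t ^ (κ-1) * ((lam/t) * F t + A t) :=
          mul_le_mul_of_nonneg_left (hrec t ht0) (Real.rpow_nonneg ht0.le _)
        have h2 : t ^ (κ-2) * t = t ^ (κ-1) := by
          rw [← Real.rpow_add_one ht0.ne', show κ-2+1 = κ-1 by ring]
        have e2 : t ^ (κ-1) * ((lam/t) * F t + A t)
            = lam * (t ^ (κ-2) * F t) + t ^ (κ-1) * A t := by
          rw [← h2]; field_simp
        calc g t ≤ ENNReal.ofReal (lam * (t ^ (κ-2) * F t) + t ^ (κ-1) * A t) := by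
              exact ENNReal.ofReal_le_ofReal (e2 ▸ e1)
          _ ≤ ENNReal.ofReal (lam * (t ^ (κ-2) * F t)) + ENNReal.ofReal (t ^ (κ-1) * A t) :=
              ENNReal.ofReal_add_le
          _ = ENNReal.ofReal lam * ENNReal.ofReal (t ^ (κ-2) * F t)
              + ENNReal.ofReal (t ^ (κ-1) * A t) := by
              rw [ENNReal.ofReal_mul hlam0.le]
      calc I ≤ ∫⁻ t in Ioc (1:ℝ) T, (ENNReal.ofReal lam * ENNReal.ofReal (t ^ (κ-2) * F t)
            + ENNReal.ofReal (t ^ (κ-1) * A t)) := setLIntegral_mono' measurableSet_Ioc pt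
        _ = ENNReal.ofReal lam * J + ∫⁻ t in Ioc (1:ℝ) T, ENNReal.ofReal (t ^ (κ-1) * A t) := by
            rw [lintegral_add_left (((show Measurable fun t : ℝ => ENNReal.ofReal (t ^ (κ-2) * F t) from (hrp2.mul hFmeas).ennreal_ofReal)).const_mul _),
              lintegral_const_mul _ ((show Measurable fun t : ℝ => ENNReal.ofReal (t ^ (κ-2) * F t) from (hrp2.mul hFmeas).ennreal_ofReal))]
        _ ≤ ENNReal.ofReal lam * J + C :=
            add_le_add le_rfl (lintegral_mono_set Ioc_subset_Ioi_self)
    -- Step B : J ≤ ofReal (1-κ)⁻¹ * (ofReal M + I)  (Fubini)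
    have stepB : J ≤ ENNReal.ofReal (1-κ)⁻¹ * (ENNReal.ofReal M + I) := by
      set S : Set (ℝ × ℝ) := {p : ℝ × ℝ | 0 < p.2 ∧ p.2 ≤ p.1} with hSdef
      have hSmeas : MeasurableSet S :=
        (measurableSet_lt measurable_const measurable_snd).inter
          (measurableSet_le measurable_snd measurable_fst)
      set f : ℝ → ℝ → ENNReal := fun t s =>
        (S.indicator (fun p => ENNReal.ofReal (p.1 ^ (κ-2)) * ENNReal.ofReal (Q p.2))) (t, s)
        with hfdef
      have hfmeas : Measurable (Function.uncurry f) := by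
        have : Function.uncurry f =
            S.indicator (fun p => ENNReal.ofReal (p.1 ^ (κ-2)) * ENNReal.ofReal (Q p.2)) := rfl
        rw [this]
        exact Measurable.indicator (by fun_prop) hSmeas
      have claim1 : J = ∫⁻ t in Ioc (1:ℝ) T, ∫⁻ s in Ioc (0:ℝ) T, f t s := by
        refine setLIntegral_congr_fun measurableSet_Ioc (fun t ht => ?_)
        have ht0 : (0:ℝ) < t := lt_trans one_pos ht.1
        have hfe : (fun s => f t s) = (Ioc (0:ℝ) t).indicator
            (fun s => ENNReal.ofReal (t ^ (κ-2)) * ENNReal.ofReal (Q s)) := by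
          ext s
          simp only [hfdef, Set.indicator_apply, hSdef, mem_setOf_eq, mem_Ioc]
        rw [hfe, lintegral_indicator measurableSet_Ioc,
          Measure.restrict_restrict measurableSet_Ioc, Ioc_inter_Ioc]
        have : max (0:ℝ) 0 = 0 := max_self 0
        rw [this, min_eq_left ht.2, lintegral_const_mul _ hQmeas.ennreal_ofReal, ← hFof t,
          ← ENNReal.ofReal_mul (Real.rpow_nonneg ht0.le _)]
      have claim2 : (∫⁻ t in Ioc (1:ℝ) T, ∫⁻ s in Ioc (0:ℝ) T, f t s)
          = ∫⁻ s in Ioc (0:ℝ) T, ∫⁻ t in Ioc (1:ℝ) T, f t s :=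
        lintegral_lintegral_swap hfmeas.aemeasurable
      have claim3 : ∀ s ∈ Ioc (0:ℝ) T, (∫⁻ t in Ioc (1:ℝ) T, f t s)
          ≤ ENNReal.ofReal (1-κ)⁻¹ * (ENNReal.ofReal (max 1 s ^ (κ-1)) * ENNReal.ofReal (Q s)) := by
        intro s hs
        set m : ℝ := max 1 s with hmdef
        have hm1 : (1:ℝ) ≤ m := le_max_left _ _
        have hm0 : (0:ℝ) < m := lt_of_lt_of_le one_pos hm1
        have hfe : (fun t => f t s) = (Ici s).indicator
            (fun t => ENNReal.ofReal (t ^ (κ-2)) * ENNReal.ofReal (Q s)) := by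
          ext t
          simp only [hfdef, Set.indicator_apply, hSdef, mem_setOf_eq, mem_Ici, hs.1, true_and]
        rw [hfe, lintegral_indicator measurableSet_Ici,
          Measure.restrict_restrict measurableSet_Ici]
        have hsub : Ici s ∩ Ioc 1 T ⊆ Ici m := by
          rintro t ⟨h1, h2⟩
          exact max_le h2.1.le h1
        calc (∫⁻ t in Ici s ∩ Ioc 1 T, ENNReal.ofReal (t ^ (κ-2)) * ENNReal.ofReal (Q s))
            ≤ ∫⁻ t in Ici m, ENNReal.ofReal (t ^ (κ-2)) * ENNReal.ofReal (Q s) :=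
              lintegral_mono_set hsub
          _ = (∫⁻ t in Ici m, ENNReal.ofReal (t ^ (κ-2))) * ENNReal.ofReal (Q s) :=
              lintegral_mul_const _ hrp2.ennreal_ofReal
          _ = (∫⁻ t in Ioi m, ENNReal.ofReal (t ^ (κ-2))) * ENNReal.ofReal (Q s) := by
              rw [Measure.restrict_congr_set Ioi_ae_eq_Ici]
          _ = ENNReal.ofReal (∫ t in Ioi m, t ^ (κ-2)) * ENNReal.ofReal (Q s) := by
              rw [ofReal_integral_eq_lintegral_ofReal
                (integrableOn_Ioi_rpow_of_lt (by linarith) hm0)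
                ((ae_restrict_iff' measurableSet_Ioi).2 (ae_of_all _ fun t ht =>
                  Real.rpow_nonneg (le_of_lt (lt_trans hm0 ht)) _))]
          _ = ENNReal.ofReal (1-κ)⁻¹ * (ENNReal.ofReal (m ^ (κ-1)) * ENNReal.ofReal (Q s)) := by
              rw [integral_Ioi_rpow_of_lt (by linarith) hm0]
              rw [show κ - 2 + 1 = κ - 1 by ring]
              have hxg : ∀ x : ℝ, -x / (κ-1) = (1-κ)⁻¹ * x := by
                intro x
                have hne : (κ - 1 : ℝ) ≠ 0 := by intro h; rw [sub_eq_zero] at h; linarith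
                have hne' : (1 - κ : ℝ) ≠ 0 := ne_of_gt h1κ
                field_simp
                ring
              rw [hxg (m ^ (κ-1))]
              rw [ENNReal.ofReal_mul (by positivity), mul_assoc]
      have claim4 : (∫⁻ s in Ioc (0:ℝ) T, ENNReal.ofReal (max 1 s ^ (κ-1)) * ENNReal.ofReal (Q s))
          ≤ ENNReal.ofReal M + I := by
        rw [← Ioc_union_Ioc_eq_Ioc zero_le_one hT,
          lintegral_union measurableSet_Ioc (Ioc_disjoint_Ioc_of_le le_rfl)]
        refine add_le_add ?_ ?_
        · calc (∫⁻ s in Ioc (0:ℝ) 1, ENNReal.ofReal (max 1 s ^ (κ-1)) * ENNReal.ofReal (Q s))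
              ≤ ∫⁻ _ in Ioc (0:ℝ) 1, ENNReal.ofReal M := by
                refine setLIntegral_mono' measurableSet_Ioc fun s hs => ?_
                rw [max_eq_left hs.2, Real.one_rpow, ENNReal.ofReal_one, one_mul]
                exact ENNReal.ofReal_le_ofReal (hQM s)
            _ = ENNReal.ofReal M := by
                rw [setLIntegral_const, Real.volume_Ioc]
                norm_num
        · refine le_of_eq (setLIntegral_congr_fun measurableSet_Ioc (fun s hs => ?_))
          rw [max_eq_right hs.1.le,
            ← ENNReal.ofReal_mul (Real.rpow_nonneg (lt_trans one_pos hs.1).le _)]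
      calc J = ∫⁻ s in Ioc (0:ℝ) T, ∫⁻ t in Ioc (1:ℝ) T, f t s := claim1.trans claim2
        _ ≤ ∫⁻ s in Ioc (0:ℝ) T, ENNReal.ofReal (1-κ)⁻¹ *
            (ENNReal.ofReal (max 1 s ^ (κ-1)) * ENNReal.ofReal (Q s)) :=
            setLIntegral_mono' measurableSet_Ioc claim3
        _ = ENNReal.ofReal (1-κ)⁻¹ *
            ∫⁻ s in Ioc (0:ℝ) T, ENNReal.ofReal (max 1 s ^ (κ-1)) * ENNReal.ofReal (Q s) := by
            rw [lintegral_const_mul _ (by fun_prop)]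
        _ ≤ ENNReal.ofReal (1-κ)⁻¹ * (ENNReal.ofReal M + I) :=
            by gcongr
    calc I ≤ ENNReal.ofReal lam * J + C := stepA
      _ ≤ ENNReal.ofReal lam * (ENNReal.ofReal (1-κ)⁻¹ * (ENNReal.ofReal M + I)) + C :=
          add_le_add (by gcongr) le_rfl
      _ = ENNReal.ofReal lam * ENNReal.ofReal (1-κ)⁻¹ * (ENNReal.ofReal M + I) + C := by
          rw [mul_assoc]
  -- finiteness of the truncated integrals
  have hIfin : ∀ T : ℝ, (∫⁻ t in Ioc (1:ℝ) T, g t) < ⊤ := by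
    intro T
    calc (∫⁻ t in Ioc (1:ℝ) T, g t) ≤ ∫⁻ _ in Ioc (1:ℝ) T, ENNReal.ofReal M := by
          refine setLIntegral_mono' measurableSet_Ioc fun t ht => ?_
          refine ENNReal.ofReal_le_ofReal ?_
          calc t ^ (κ-1) * Q t ≤ 1 * Q t :=
                mul_le_mul_of_nonneg_right
                  (Real.rpow_le_one_of_one_le_of_nonpos ht.1.le (by linarith)) (hQ0 t)
            _ = Q t := one_mul _
            _ ≤ M := hQM t
      _ = ENNReal.ofReal M * volume (Ioc (1:ℝ) T) := setLIntegral_const _ _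
      _ < ⊤ := ENNReal.mul_lt_top ENNReal.ofReal_lt_top measure_Ioc_lt_top
  -- uniform bound
  set c : ℝ := lam * (1-κ)⁻¹ with hcdef
  have hc0 : 0 ≤ c := by positivity
  have hc1 : c < 1 := by
    rw [hcdef, ← div_eq_mul_inv, div_lt_one h1κ]
    linarith
  set B : ℝ := (c * M + C.toReal) / (1 - c) with hBdef
  have hB0 : 0 ≤ B := by
    apply div_nonneg
    · positivity
    · linarith
  have hbound : ∀ T : ℝ, 1 ≤ T → (∫⁻ t in Ioc (1:ℝ) T, g t) ≤ ENNReal.ofReal B := by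
    intro T hT
    set x : ℝ := (∫⁻ t in Ioc (1:ℝ) T, g t).toReal with hxdef
    have hx0 : 0 ≤ x := ENNReal.toReal_nonneg
    have hxe : (∫⁻ t in Ioc (1:ℝ) T, g t) = ENNReal.ofReal x :=
      (ENNReal.ofReal_toReal (hIfin T).ne).symm
    have hCe : C = ENNReal.ofReal C.toReal := (ENNReal.ofReal_toReal hCfin.ne).symm
    have h := hmain T hT
    rw [hxe, hCe] at h
    have h' : ENNReal.ofReal x ≤ ENNReal.ofReal (c * (M + x) + C.toReal) := by
      refine h.trans (le_of_eq ?_)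
      rw [← ENNReal.ofReal_add hM hx0, ← ENNReal.ofReal_mul hlam0.le,
        ← ENNReal.ofReal_mul (by positivity), ← ENNReal.ofReal_add (by positivity)
          ENNReal.toReal_nonneg]
    have hreal : x ≤ c * (M + x) + C.toReal := by
      have := (ENNReal.ofReal_le_ofReal_iff (by positivity)).1 h'
      exact this
    rw [hxe]
    refine ENNReal.ofReal_le_ofReal ?_
    rw [hBdef, le_div_iff₀ (by linarith : (0:ℝ) < 1 - c)]
    nlinarith
  -- integral over Ioi 1 is finite
  have hIoi1 : (∫⁻ t in Ioi (1:ℝ), g t) ≤ ENNReal.ofReal B := by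
    have hsup : ∀ x : ℝ, (⨆ n : ℕ, (Ioc (1:ℝ) (1+n)).indicator g x) = (Ioi (1:ℝ)).indicator g x := by
      intro x
      by_cases hx : x ∈ Ioi (1:ℝ)
      · obtain ⟨n, hn⟩ := exists_nat_ge (x - 1)
        have hxm : x ∈ Ioc (1:ℝ) (1+n) := ⟨hx, by linarith⟩
        refine le_antisymm (iSup_le fun m => ?_) ?_
        · exact (indicator_le_indicator_of_subset Ioc_subset_Ioi_self (fun _ => zero_le)) x
        · have heq : (Ioi (1:ℝ)).indicator g x = (Ioc (1:ℝ) (1+n)).indicator g x := by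
            rw [indicator_of_mem hx, indicator_of_mem hxm]
          rw [heq]
          exact le_iSup (fun m : ℕ => (Ioc (1:ℝ) (1+m)).indicator g x) n
      · have h0 : ∀ m : ℕ, (Ioc (1:ℝ) (1+m)).indicator g x = 0 :=
          fun m => indicator_of_notMem (fun h => hx (Ioc_subset_Ioi_self h)) g
        rw [indicator_of_notMem hx]
        simp [h0]
    have hmono : Monotone fun n : ℕ => (Ioc (1:ℝ) (1+n)).indicator g := by
      intro a b hab
      have hcast : (1:ℝ) + a ≤ 1 + b := by
        have := (Nat.cast_le (α := ℝ)).2 hab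
        linarith
      exact indicator_le_indicator_of_subset (Ioc_subset_Ioc le_rfl hcast) (fun _ => zero_le)
    calc (∫⁻ t in Ioi (1:ℝ), g t) = ∫⁻ t, (Ioi (1:ℝ)).indicator g t :=
          (lintegral_indicator measurableSet_Ioi g).symm
      _ = ∫⁻ t, ⨆ n : ℕ, (Ioc (1:ℝ) (1+n)).indicator g t := by simp_rw [hsup]
      _ = ⨆ n : ℕ, ∫⁻ t, (Ioc (1:ℝ) (1+n)).indicator g t :=
          lintegral_iSup (fun n => hgmeas.indicator measurableSet_Ioc) hmono
      _ = ⨆ n : ℕ, ∫⁻ t in Ioc (1:ℝ) (1+n), g t := by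
          simp_rw [lintegral_indicator measurableSet_Ioc g]
      _ ≤ ENNReal.ofReal B := iSup_le fun n => hbound _ (by linarith [Nat.cast_nonneg (α := ℝ) n])
  -- integrability on Ioi 1
  have h1inf : IntegrableOn (fun t => t ^ (κ-1) * Q t) (Ioi (1:ℝ)) := by
    refine ⟨hmeas.aestronglyMeasurable, ?_⟩
    rw [hasFiniteIntegral_iff_ofReal]
    · exact lt_of_le_of_lt hIoi1 ENNReal.ofReal_lt_top
    · refine (ae_restrict_iff' measurableSet_Ioi).2 (ae_of_all _ fun t ht => ?_)
      exact mul_nonneg (Real.rpow_nonneg (by linarith [mem_Ioi.1 ht]) _) (hQ0 t)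
  -- integrability on Ioc 0 1
  have h01 : IntegrableOn (fun t => t ^ (κ-1) * Q t) (Ioc (0:ℝ) 1) := by
    have hrint : IntegrableOn (fun t : ℝ => t ^ (κ-1) * M) (Ioc (0:ℝ) 1) := by
      have h := intervalIntegral.intervalIntegrable_rpow' (a := 0) (b := 1)
        (by linarith : (-1:ℝ) < κ - 1)
      rw [intervalIntegrable_iff_integrableOn_Ioc_of_le zero_le_one] at h
      exact h.mul_const M
    refine Integrable.mono' hrint hmeas.aestronglyMeasurable ?_
    refine (ae_restrict_iff' measurableSet_Ioc).2 (ae_of_all _ fun t ht => ?_)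
    have ht0 : (0:ℝ) < t := ht.1
    rw [Real.norm_eq_abs, abs_of_nonneg (mul_nonneg (Real.rpow_nonneg ht0.le _) (hQ0 t))]
    exact mul_le_mul_of_nonneg_left (hQM t) (Real.rpow_nonneg ht0.le _)
  have := h01.union h1inf
  rwa [Ioc_union_Ioi_eq_Ioi zero_le_one] at this
end

section
/- Let d ≥ 3, 1 + 2/(d−1) < p, η ∈ ℝ, t₁ > η. Let h : (η,∞) → [0,∞) be measurable with ∫_η^∞ (t−η)^{d−1} h(t)^{p+1} dt ≤ E. Then for all t₂ > t₁, ∫_{t₁}^{t₂} (t−η)^{(d−1)/2} h(t)^p dt ≤ C(d,p) · E^{p/(p+1)} · (t₁−η)^{−β/2}, where β = ((d−1)(p−1)−2)/(p+1) > 0. -/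
open MeasureTheory Set Filter Topology

lemma aux_integrableOn (s c η : ℝ) (hs : s < -1) (hc : η < c) :
    IntegrableOn (fun t : ℝ => (t - η) ^ s) (Ioi c) := by
  have hmp := measurePreserving_add_right (volume : Measure ℝ) η
  have hemb := (MeasurableEquiv.addRight η).measurableEmbedding
  have hpre : (· + η) ⁻¹' (Ioi c) = Ioi (c - η) := by
    ext x; simp [sub_lt_iff_lt_add]
  refine (hmp.integrableOn_comp_preimage hemb
      (f := fun t : ℝ => (t - η) ^ s) (s := Ioi c)).1 ?_
  rw [hpre]
  have : ((fun t : ℝ => (t - η) ^ s) ∘ (· + η)) = fun u : ℝ => u ^ s := by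
    funext u; simp
  rw [this]
  exact integrableOn_Ioi_rpow_of_lt hs (by linarith)

lemma aux_integral (s c η : ℝ) (hs : s < -1) (hc : η < c) :
    ∫ t in Ioi c, (t - η) ^ s = -(c - η) ^ (s + 1) / (s + 1) := by
  have hmp := measurePreserving_add_right (volume : Measure ℝ) η
  have hemb := (MeasurableEquiv.addRight η).measurableEmbedding
  have hpre : (· + η) ⁻¹' (Ioi c) = Ioi (c - η) := by
    ext x; simp [sub_lt_iff_lt_add]
  have key := hmp.setIntegral_preimage_emb hemb (fun t : ℝ => (t - η) ^ s) (Ioi c)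
  rw [hpre] at key
  simp only [add_sub_cancel_right] at key
  rw [← key, integral_Ioi_rpow_of_lt hs (by linarith)]

/-- Hölder estimate along characteristic lines: for `d ≥ 3`, `p > 1 + 2/(d−1)`, if
`∫_η^∞ (t−η)^{d−1} h(t)^{p+1} dt ≤ E` then for `t₂ > t₁ > η`,
`∫_{t₁}^{t₂} (t−η)^{(d−1)/2} h(t)^p dt ≤ C(d,p) E^{p/(p+1)} (t₁−η)^{−β/2}` with
`β = ((d−1)(p−1)−2)/(p+1) > 0`. -/
theorem stmt11 (d : ℕ) (hd : 3 ≤ d) (p : ℝ) (hp : 1 + 2 / ((d:ℝ) - 1) < p) :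
    ∃ C : ℝ, 0 < C ∧ ∀ (η t₁ E : ℝ) (h : ℝ → ℝ), η < t₁ → 0 ≤ E →
      Measurable h → (∀ t, 0 ≤ h t) →
      IntegrableOn (fun t => (t - η) ^ ((d:ℝ) - 1) * (h t) ^ (p + 1)) (Ioi η) →
      (∫ t in Ioi η, (t - η) ^ ((d:ℝ) - 1) * (h t) ^ (p + 1)) ≤ E →
      ∀ t₂, t₁ < t₂ →
        (∫ t in Ioc t₁ t₂, (t - η) ^ (((d:ℝ) - 1) / 2) * (h t) ^ p)
          ≤ C * E ^ (p / (p + 1))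
            * (t₁ - η) ^ (-((((d:ℝ) - 1) * (p - 1) - 2) / (p + 1)) / 2) := by
  set a : ℝ := (d:ℝ) - 1 with ha_def
  have hd3 : (3:ℝ) ≤ (d:ℝ) := by exact_mod_cast hd
  have ha2 : 2 ≤ a := by simp only [ha_def]; linarith
  have ha0 : 0 < a := by linarith
  have hp1 : 1 < p := by
    have : 0 < 2 / a := by positivity
    linarith
  have hp0 : 0 < p := by linarith
  have hq0 : 0 < p + 1 := by linarith
  have hm : 0 < a * (p - 1) - 2 := by
    have h2 : 2 / a < p - 1 := by linarith
    have := (div_lt_iff₀ ha0).1 h2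
    nlinarith
  set m : ℝ := a * (p - 1) - 2 with hm_def
  -- the constant
  refine ⟨(2 / m) ^ (1 / (p + 1)), Real.rpow_pos_of_pos (by positivity) _, ?_⟩
  intro η t₁ E h hηt₁ hE hmeas hnn hInt hIE t₂ ht₁₂
  set K : ℝ := t₁ - η with hK_def
  have hK : 0 < K := by simp only [hK_def]; linarith
  set r : ℝ := (p + 1) / p with hr_def
  set q : ℝ := p + 1 with hq_def
  have hr1 : 1 < r := by
    rw [hr_def, lt_div_iff₀ hp0]; linarith
  have hconj : r.HolderConjugate q := by
    rw [Real.holderConjugate_iff]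
    constructor
    · exact hr1
    · rw [hr_def, hq_def]; field_simp
  set e1 : ℝ := a * p / (p + 1) with he1_def
  set e2 : ℝ := -(a * (p - 1) / (2 * (p + 1))) with he2_def
  set F : ℝ → ℝ := fun t => (t - η) ^ e1 * h t ^ p with hF_def
  set G : ℝ → ℝ := fun t => (t - η) ^ e2 with hG_def
  set μ : Measure ℝ := volume.restrict (Ioc t₁ t₂) with hμ_def
  have hsub : Ioc t₁ t₂ ⊆ Ioi η := fun x hx => lt_trans hηt₁ hx.1
  -- pointwise positivity data on the set
  have hpos : ∀ t ∈ Ioc t₁ t₂, 0 < t - η := fun t ht =>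
    sub_pos.mpr (lt_trans hηt₁ ht.1)
  -- Step 1: the integrand equals F * G on the set
  have step1 : (∫ t in Ioc t₁ t₂, (t - η) ^ (a / 2) * (h t) ^ p)
      = ∫ t in Ioc t₁ t₂, F t * G t := by
    refine setIntegral_congr_fun measurableSet_Ioc (fun t ht => ?_)
    have h0 : 0 < t - η := hpos t ht
    simp only [hF_def, hG_def]
    rw [mul_right_comm, ← Real.rpow_add h0]
    congr 2
    rw [he1_def, he2_def]; field_simp; ring
  -- F^r equals the weighted integrand on the set
  have hFr : ∀ t ∈ Ioc t₁ t₂, F t ^ r = (t - η) ^ a * h t ^ (p + 1) := by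
    intro t ht
    have h0 : 0 < t - η := hpos t ht
    simp only [hF_def]
    rw [Real.mul_rpow (Real.rpow_nonneg h0.le _) (Real.rpow_nonneg (hnn t) _),
      ← Real.rpow_mul h0.le, ← Real.rpow_mul (hnn t)]
    congr 2
    · rw [he1_def, hr_def]; field_simp; exact hq_def
    · rw [hr_def]; field_simp; exact hq_def
  have hGq : ∀ t ∈ Ioc t₁ t₂, G t ^ q = (t - η) ^ (-(a * (p - 1) / 2)) := by
    intro t ht
    have h0 : 0 < t - η := hpos t ht
    simp only [hG_def]
    rw [← Real.rpow_mul h0.le]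
    congr 1
    rw [he2_def, hq_def]; field_simp
  have hsneg : -(a * (p - 1) / 2) < -1 := by
    rw [neg_lt_neg_iff, lt_div_iff₀ (by norm_num : (0:ℝ) < 2)]
    linarith
  -- integrability on Ioi t₁ of the G-power
  have hGint : IntegrableOn (fun t : ℝ => (t - η) ^ (-(a * (p - 1) / 2))) (Ioi t₁) :=
    aux_integrableOn _ _ _ hsneg hηt₁
  -- MemLp for F
  have hFmeas : Measurable F := by
    simp only [hF_def]; fun_prop
  have hGmeas : Measurable G := by
    simp only [hG_def]; fun_prop
  have hFr_int : Integrable (fun t => F t ^ r) μ := by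
    refine (Integrable.congr (f := fun t => (t - η) ^ a * h t ^ (p + 1)) ?_ ?_)
    · exact (hInt.mono_set hsub)
    · rw [hμ_def]
      exact (ae_restrict_iff' measurableSet_Ioc).2
        (Eventually.of_forall fun t ht => (hFr t ht).symm)
  have hGq_int : Integrable (fun t => G t ^ q) μ := by
    refine (Integrable.congr (f := fun t : ℝ => (t - η) ^ (-(a * (p - 1) / 2))) ?_ ?_)
    · exact hGint.mono_set (Ioc_subset_Ioi_self)
    · rw [hμ_def]
      exact (ae_restrict_iff' measurableSet_Ioc).2
        (Eventually.of_forall fun t ht => (hGq t ht).symm)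
  have hF_nonneg : 0 ≤ᵐ[μ] F := by
    rw [hμ_def]
    refine (ae_restrict_iff' measurableSet_Ioc).2 (Eventually.of_forall fun t ht => ?_)
    exact mul_nonneg (Real.rpow_nonneg (hpos t ht).le _) (Real.rpow_nonneg (hnn t) _)
  have hG_nonneg : 0 ≤ᵐ[μ] G := by
    rw [hμ_def]
    refine (ae_restrict_iff' measurableSet_Ioc).2 (Eventually.of_forall fun t ht => ?_)
    exact Real.rpow_nonneg (hpos t ht).le _
  have hr0 : (0:ℝ) < r := lt_trans zero_lt_one hr1
  have hq1 : (0:ℝ) < q := by rw [hq_def]; linarith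
  have hFmem : MemLp F (ENNReal.ofReal r) μ := by
    have hne : ENNReal.ofReal r ≠ 0 := by
      simp only [ne_eq, ENNReal.ofReal_eq_zero, not_le]; exact hr0
    have hnt : ENNReal.ofReal r ≠ ⊤ := ENNReal.ofReal_ne_top
    rw [← memLp_norm_rpow_iff (q := ENNReal.ofReal r) hFmeas.aestronglyMeasurable hne hnt,
      ENNReal.div_self hne hnt, ENNReal.toReal_ofReal hr0.le, memLp_one_iff_integrable]
    refine hFr_int.congr ?_
    filter_upwards [hF_nonneg] with x hx
    rw [Real.norm_of_nonneg hx]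
  have hGmem : MemLp G (ENNReal.ofReal q) μ := by
    have hne : ENNReal.ofReal q ≠ 0 := by
      simp only [ne_eq, ENNReal.ofReal_eq_zero, not_le]; exact hq1
    have hnt : ENNReal.ofReal q ≠ ⊤ := ENNReal.ofReal_ne_top
    rw [← memLp_norm_rpow_iff (q := ENNReal.ofReal q) hGmeas.aestronglyMeasurable hne hnt,
      ENNReal.div_self hne hnt, ENNReal.toReal_ofReal hq1.le, memLp_one_iff_integrable]
    refine hGq_int.congr ?_
    filter_upwards [hG_nonneg] with x hx
    rw [Real.norm_of_nonneg hx]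
  -- Hölder
  have holder := MeasureTheory.integral_mul_le_Lp_mul_Lq_of_nonneg hconj
      hF_nonneg hG_nonneg hFmem hGmem
  -- bound the F factor
  have hFbound : (∫ t, F t ^ r ∂μ) ≤ E := by
    have e1' : (∫ t, F t ^ r ∂μ) = ∫ t in Ioc t₁ t₂, (t - η) ^ a * h t ^ (p + 1) :=
      setIntegral_congr_fun measurableSet_Ioc hFr
    rw [e1']
    refine le_trans (setIntegral_mono_set hInt ?_ (HasSubset.Subset.eventuallyLE hsub)) hIE
    refine (ae_restrict_iff' measurableSet_Ioi).2 (Eventually.of_forall fun t ht => ?_)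
    have h0 : (0:ℝ) < t - η := by simpa [sub_pos] using ht
    exact mul_nonneg (Real.rpow_nonneg h0.le _) (Real.rpow_nonneg (hnn t) _)
  -- bound the G factor
  have hGbound : (∫ t, G t ^ q ∂μ) ≤ K ^ (-(m / (p+1)) / 2 * (p + 1)) * (2 / m) := by
    have e2' : (∫ t, G t ^ q ∂μ) = ∫ t in Ioc t₁ t₂, (t - η) ^ (-(a * (p - 1) / 2)) :=
      setIntegral_congr_fun measurableSet_Ioc hGq
    rw [e2']
    have mono : (∫ t in Ioc t₁ t₂, (t - η) ^ (-(a * (p - 1) / 2)))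
        ≤ ∫ t in Ioi t₁, (t - η) ^ (-(a * (p - 1) / 2)) := by
      refine setIntegral_mono_set hGint ?_
        (HasSubset.Subset.eventuallyLE Ioc_subset_Ioi_self)
      refine (ae_restrict_iff' measurableSet_Ioi).2 (Eventually.of_forall fun t ht => ?_)
      have h0 : (0:ℝ) < t - η := by
        have : t₁ < t := ht
        linarith
      exact Real.rpow_nonneg h0.le _
    refine mono.trans_eq ?_
    rw [aux_integral _ _ _ hsneg hηt₁]
    rw [← hK_def]
    have hexp : -(a * (p - 1) / 2) + 1 = -(m / (p+1)) / 2 * (p + 1) := by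
      rw [hm_def]; field_simp; ring
    rw [hexp]
    field_simp
  -- combine
  rw [step1]
  refine holder.trans ?_
  set X : ℝ := -(m / (p + 1)) / 2 with hX_def
  have hFint_nonneg : 0 ≤ ∫ t, F t ^ r ∂μ := by
    refine integral_nonneg_of_ae ?_
    filter_upwards [hF_nonneg] with x hx
    exact Real.rpow_nonneg hx r
  have hGint_nonneg : 0 ≤ ∫ t, G t ^ q ∂μ := by
    refine integral_nonneg_of_ae ?_
    filter_upwards [hG_nonneg] with x hx
    exact Real.rpow_nonneg hx q
  have h1 : (∫ t, F t ^ r ∂μ) ^ (1 / r) ≤ E ^ (1 / r) :=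
    Real.rpow_le_rpow hFint_nonneg hFbound (by positivity)
  have h2 : (∫ t, G t ^ q ∂μ) ^ (1 / q) ≤ (K ^ (X * (p + 1)) * (2 / m)) ^ (1 / q) :=
    Real.rpow_le_rpow hGint_nonneg hGbound (by positivity)
  have step2 : (∫ t, F t ^ r ∂μ) ^ (1 / r) * (∫ t, G t ^ q ∂μ) ^ (1 / q)
      ≤ E ^ (1 / r) * ((K ^ (X * (p + 1)) * (2 / m)) ^ (1 / q)) :=
    mul_le_mul h1 h2 (Real.rpow_nonneg hGint_nonneg _) (Real.rpow_nonneg hE _)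
  refine step2.trans_eq ?_
  have e3 : (K ^ (X * (p + 1)) * (2 / m)) ^ (1 / q)
      = K ^ X * (2 / m) ^ (1 / q) := by
    rw [Real.mul_rpow (Real.rpow_nonneg hK.le _) (by positivity),
      ← Real.rpow_mul hK.le]
    congr 2
    rw [hq_def]; field_simp
  have e4 : (1:ℝ) / r = p / q := by rw [hr_def, hq_def, one_div_div]
  rw [e3, e4]
  ring
end
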